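/- In the graph of the previous construction (directed 2k-cycle through x₁,y₁,…,x_k,y_k with arc weights -1, plus parallel paths (x_i,z_i,y_i) and (x_i,z'_i,y_i) with arc weights 2k), the unique negative-weight simple directed cycle is the base cycle itself, of weight -2k. -/

import Mathlib

open Finset

/-- A simple directed cycle, identified with its arc set: the arcs
`(f i, f (i+1))` of an injective map `f : ZMod (n+1) → V`. -/
def IsCycle {V : Type} [DecidableEq V] (C : Finset (V × V)) : Prop :=
  ∃ (n : ℕ) (f : ZMod (n + 1) → V), Function.Injective f ∧
    C = Finset.image (fun i => (f i, f (i + 1))) Finset.univ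

/-- Characteristic vector of an arc set. -/
def chi {V : Type} [DecidableEq V] (C : Finset (V × V)) : V × V → ℝ :=
  fun e => if e ∈ C then 1 else 0

/-- Membership in the polyhedron `P(G,w)` of negative-weight flows:
nonnegativity, support in `E`, flow conservation at every vertex, and
total weight `-1`. -/
def memP {V : Type} [Fintype V] [DecidableEq V] (E : Finset (V × V))
    (w : V × V → ℝ) (y : V × V → ℝ) : Prop :=
  (∀ e, 0 ≤ y e) ∧ (∀ e, e ∉ E → y e = 0) ∧
  (∀ u : V, ∑ e ∈ E.filter (fun e => e.1 = u), y e
          = ∑ e ∈ E.filter (fun e => e.2 = u), y e) ∧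
  (∑ e ∈ E, w e * y e = -1)

/-- A vertex (extreme point) of a convex set: a member which is not a proper
convex combination of two distinct members. -/
def IsVertexOf {α : Type*} [AddCommGroup α] [Module ℝ α] (P : Set α) (y : α) : Prop :=
  y ∈ P ∧ ¬ ∃ y₁ ∈ P, ∃ y₂ ∈ P, y₁ ≠ y₂ ∧
    ∃ t : ℝ, 0 < t ∧ t < 1 ∧ y = t • y₁ + (1 - t) • y₂

/-- A 2-cycle: a negative cycle and a positive cycle whose union contains no
other cycle. -/
def IsTwoCycle {V : Type} [Fintype V] [DecidableEq V] (E : Finset (V × V))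
    (w : V × V → ℝ) (C₁ C₂ : Finset (V × V)) : Prop :=
  IsCycle C₁ ∧ IsCycle C₂ ∧ C₁ ⊆ E ∧ C₂ ⊆ E ∧
  (∑ e ∈ C₁, w e) < 0 ∧ 0 < (∑ e ∈ C₂, w e) ∧
  ∀ C : Finset (V × V), IsCycle C → C ⊆ C₁ ∪ C₂ → C = C₁ ∨ C = C₂

/-- Vertices: `(0,i) = xᵢ`, `(1,i) = yᵢ`, `(2,i) = zᵢ`, `(3,i) = z'ᵢ`.  The arcs:
the base `2k`-cycle `xᵢ → yᵢ → xᵢ₊₁`, plus the parallel paths `xᵢ → zᵢ → yᵢ`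
and `xᵢ → z'ᵢ → yᵢ`. -/
def gE (k : ℕ) [NeZero k] : Finset ((Fin 4 × ZMod k) × (Fin 4 × ZMod k)) :=
  (Finset.univ.image fun i : ZMod k => (((0 : Fin 4), i), ((1 : Fin 4), i))) ∪
  (Finset.univ.image fun i : ZMod k => (((1 : Fin 4), i), ((0 : Fin 4), i + 1))) ∪
  (Finset.univ.image fun i : ZMod k => (((0 : Fin 4), i), ((2 : Fin 4), i))) ∪
  (Finset.univ.image fun i : ZMod k => (((2 : Fin 4), i), ((1 : Fin 4), i))) ∪
  (Finset.univ.image fun i : ZMod k => (((0 : Fin 4), i), ((3 : Fin 4), i))) ∪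
  (Finset.univ.image fun i : ZMod k => (((3 : Fin 4), i), ((1 : Fin 4), i)))

/-- Arc weights: the base-cycle arcs (between `x`- and `y`-vertices) have
weight `-1`; all detour arcs have weight `2k`. -/
def gw (k : ℕ) [NeZero k] : (Fin 4 × ZMod k) × (Fin 4 × ZMod k) → ℝ :=
  fun e => if e.1.1 ≤ 1 ∧ e.2.1 ≤ 1 then -1 else 2 * k

/-- The base `2k`-cycle `x₁ → y₁ → x₂ → ⋯ → y_k → x₁`, as an arc set. -/
def gBase (k : ℕ) [NeZero k] : Finset ((Fin 4 × ZMod k) × (Fin 4 × ZMod k)) :=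
  (Finset.univ.image fun i : ZMod k => (((0 : Fin 4), i), ((1 : Fin 4), i))) ∪
  (Finset.univ.image fun i : ZMod k => (((1 : Fin 4), i), ((0 : Fin 4), i + 1)))

section Aux
variable {k : ℕ} [NeZero k]

lemma cyc_out {V : Type} [DecidableEq V] {C : Finset (V × V)} (h : IsCycle C)
    {a b c : V} (hab : (a,b) ∈ C) (hac : (a,c) ∈ C) : b = c := by
  obtain ⟨n, f, hf, rfl⟩ := h
  simp only [Finset.mem_image, Finset.mem_univ, true_and] at hab hac
  obtain ⟨i, hi⟩ := hab; obtain ⟨j, hj⟩ := hac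
  have h1 : f i = a := (Prod.ext_iff.1 hi).1
  have h2 : f j = a := (Prod.ext_iff.1 hj).1
  have : i = j := hf (h1.trans h2.symm)
  subst this
  exact (Prod.ext_iff.1 (hi.symm.trans hj)).2

lemma cyc_in {V : Type} [DecidableEq V] {C : Finset (V × V)} (h : IsCycle C)
    {a b c : V} (hab : (a,c) ∈ C) (hac : (b,c) ∈ C) : a = b := by
  obtain ⟨n, f, hf, rfl⟩ := h
  simp only [Finset.mem_image, Finset.mem_univ, true_and] at hab hac
  obtain ⟨i, hi⟩ := hab; obtain ⟨j, hj⟩ := hac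
  have h1 : f (i+1) = c := (Prod.ext_iff.1 hi).2
  have h2 : f (j+1) = c := (Prod.ext_iff.1 hj).2
  have : i = j := by have := hf (h1.trans h2.symm); exact add_right_cancel this
  subst this
  exact (Prod.ext_iff.1 (hi.symm.trans hj)).1

/-- Successor along the base cycle. -/
def gsucc (k : ℕ) [NeZero k] : Fin 4 × ZMod k → Fin 4 × ZMod k :=
  fun v => if v.1 = 0 then ((1 : Fin 4), v.2) else ((0 : Fin 4), v.2 + 1)

lemma mem_gBase_iff {e : (Fin 4 × ZMod k) × (Fin 4 × ZMod k)} :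
    e ∈ gBase k ↔ (∃ i : ZMod k, e = (((0 : Fin 4), i), ((1 : Fin 4), i)))
      ∨ (∃ i : ZMod k, e = (((1 : Fin 4), i), ((0 : Fin 4), i + 1))) := by
  simp [gBase, eq_comm]

lemma mem_gBase_iff' {e : (Fin 4 × ZMod k) × (Fin 4 × ZMod k)} :
    e ∈ gBase k ↔ e.1.1 ≤ 1 ∧ e.2 = gsucc k e.1 := by
  rw [mem_gBase_iff]
  constructor
  · rintro (⟨i, rfl⟩ | ⟨i, rfl⟩) <;> simp [gsucc]
  · rintro ⟨h1, h2⟩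
    obtain ⟨⟨t, j⟩, v2⟩ := e
    fin_cases t
    · left; exact ⟨j, by simp [gsucc] at h2; simp [h2]⟩
    · right; exact ⟨j, by simp [gsucc] at h2; simp [h2]⟩
    · simp at h1
    · simp at h1

lemma mem_gE_iff {e : (Fin 4 × ZMod k) × (Fin 4 × ZMod k)} :
    e ∈ gE k ↔ (∃ i : ZMod k, e = (((0 : Fin 4), i), ((1 : Fin 4), i)))
      ∨ (∃ i : ZMod k, e = (((1 : Fin 4), i), ((0 : Fin 4), i + 1)))
      ∨ (∃ i : ZMod k, e = (((0 : Fin 4), i), ((2 : Fin 4), i)))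
      ∨ (∃ i : ZMod k, e = (((2 : Fin 4), i), ((1 : Fin 4), i)))
      ∨ (∃ i : ZMod k, e = (((0 : Fin 4), i), ((3 : Fin 4), i)))
      ∨ (∃ i : ZMod k, e = (((3 : Fin 4), i), ((1 : Fin 4), i))) := by
  simp [gE, eq_comm, or_assoc]

lemma gw_of_base {e : (Fin 4 × ZMod k) × (Fin 4 × ZMod k)} (h : e ∈ gBase k) :
    gw k e = -1 := by
  rw [mem_gBase_iff] at h
  rcases h with ⟨i, rfl⟩ | ⟨i, rfl⟩ <;> simp [gw]

lemma card_gBase : (gBase k).card = 2 * k := by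
  rw [gBase, Finset.card_union_of_disjoint]
  · rw [Finset.card_image_of_injective _ (fun a b h => by
        simpa [Prod.ext_iff] using h),
      Finset.card_image_of_injective _ (fun a b h => by
        simpa [Prod.ext_iff] using h)]
    simp [ZMod.card]; ring
  · rw [Finset.disjoint_left]
    rintro e he1 he2
    simp only [Finset.mem_image, Finset.mem_univ, true_and] at he1 he2
    obtain ⟨i, rfl⟩ := he1
    obtain ⟨j, hj⟩ := he2
    simp [Prod.ext_iff] at hj


lemma gsucc_gsucc {v : Fin 4 × ZMod k} (h : v.1 ≤ 1) :
    gsucc k (gsucc k v) = (v.1, v.2 + 1) := by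
  obtain ⟨t, j⟩ := v
  fin_cases t
  · simp [gsucc]
  · simp [gsucc]
  · simp at h
  · simp at h

lemma gsucc_iter_two (t : Fin 4) (ht : t ≤ 1) (j : ZMod k) (m : ℕ) :
    (gsucc k)^[2*m] (t, j) = (t, j + m) := by
  induction m with
  | zero => simp
  | succ m ih =>
      have h2 : 2*(m+1) = (2*m + 1) + 1 := by ring
      rw [h2, Function.iterate_succ_apply', Function.iterate_succ_apply', ih]
      have := gsucc_gsucc (v := (t, j + (m:ZMod k))) (by exact ht)
      rw [this]
      push_cast
      ring_nf

lemma gsucc_orbit (v w : Fin 4 × ZMod k) (hv : v.1 ≤ 1) (hw : w.1 ≤ 1) :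
    ∃ m : ℕ, (gsucc k)^[m] v = w := by
  have key : ∀ x : ZMod k, ((x.val : ℕ) : ZMod k) = x := fun x => by
    simp [ZMod.natCast_val, ZMod.cast_id]
  obtain ⟨t0, j0⟩ := v; obtain ⟨t, j⟩ := w
  fin_cases t0
  · fin_cases t
    · exact ⟨2*(j-j0).val, by rw [gsucc_iter_two _ (by decide), key]; simp⟩
    · refine ⟨2*(j-j0).val + 1, ?_⟩
      rw [Function.iterate_succ_apply', gsucc_iter_two _ (by decide), key]
      simp [gsucc]
    · simp at hw
    · simp at hw
  · fin_cases t
    · refine ⟨2*(j-j0-1).val + 1, ?_⟩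
      rw [Function.iterate_succ_apply', gsucc_iter_two _ (by decide), key]
      simp [gsucc]
      ring
    · exact ⟨2*(j-j0).val, by rw [gsucc_iter_two _ (by decide), key]; simp⟩
    · simp at hw
    · simp at hw
  · simp at hv
  · simp at hv


lemma isCycle_gBase (hk : 0 < k) : IsCycle (gBase k) := by
  have key : ∀ x : ZMod k, ((x.val : ℕ) : ZMod k) = x := fun x => by
    simp [ZMod.natCast_val, ZMod.cast_id]
  haveI hfact : Fact (1 < 2*k - 1 + 1) := ⟨by omega⟩
  have hvlt : ∀ i : ZMod (2*k - 1 + 1), i.val < 2*k := fun i => by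
    have := ZMod.val_lt i; omega
  have hvadd : ∀ i : ZMod (2*k - 1 + 1), (i + 1).val = (i.val + 1) % (2*k) := by
    intro i
    rw [ZMod.val_add, ZMod.val_one]
    congr 1
    omega
  have hvcast : ∀ a : ℕ, a < 2*k → ((a : ZMod (2*k - 1 + 1))).val = a := fun a ha =>
    ZMod.val_cast_of_lt (by omega)
  refine ⟨2*k - 1, fun i => (if i.val % 2 = 0 then (0 : Fin 4) else 1,
      ((i.val / 2 : ℕ) : ZMod k)), ?_, ?_⟩
  · intro i j hij
    simp only [Prod.mk.injEq] at hij
    obtain ⟨h1, h2⟩ := hij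
    have hi := hvlt i
    have hj := hvlt j
    have ha := ZMod.val_cast_of_lt (n := k) (a := i.val / 2) (by omega)
    have hb := ZMod.val_cast_of_lt (n := k) (a := j.val / 2) (by omega)
    rw [h2] at ha
    have hdiv : i.val / 2 = j.val / 2 := by omega
    have hpar : i.val % 2 = j.val % 2 := by
      by_cases hp : i.val % 2 = 0 <;> by_cases hq : j.val % 2 = 0 <;>
        simp [hp, hq] at h1 <;> omega
    have hval : i.val = j.val := by omega
    have : ((i.val : ℕ) : ZMod (2*k - 1 + 1)) = ((j.val : ℕ) : ZMod (2*k - 1 + 1)) := by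
      rw [hval]
    rwa [ZMod.natCast_val, ZMod.natCast_val, ZMod.cast_id, ZMod.cast_id] at this
  · ext e
    simp only [Finset.mem_image, Finset.mem_univ, true_and]
    constructor
    · intro he
      rw [mem_gBase_iff] at he
      rcases he with ⟨j, rfl⟩ | ⟨j, rfl⟩
      · refine ⟨((2 * j.val : ℕ) : ZMod (2*k - 1 + 1)), ?_⟩
        have hjk : j.val < k := ZMod.val_lt j
        have hv1 : ((2 * j.val : ℕ) : ZMod (2*k - 1 + 1)).val = 2 * j.val :=
          hvcast _ (by omega)
        have hv2 : (((2 * j.val : ℕ) : ZMod (2*k - 1 + 1)) + 1).val = 2 * j.val + 1 := by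
          rw [hvadd, hv1, Nat.mod_eq_of_lt (by omega)]
        rw [Prod.mk.injEq, Prod.mk.injEq, Prod.mk.injEq]
        refine ⟨⟨?_, ?_⟩, ?_, ?_⟩
        · rw [hv1, show 2 * j.val % 2 = 0 from by omega]; simp
        · rw [hv1, show 2 * j.val / 2 = j.val from by omega, key]
        · rw [hv2, show (2 * j.val + 1) % 2 = 1 from by omega]; simp
        · rw [hv2, show (2 * j.val + 1) / 2 = j.val from by omega, key]
      · refine ⟨((2 * j.val + 1 : ℕ) : ZMod (2*k - 1 + 1)), ?_⟩
        have hjk : j.val < k := ZMod.val_lt j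
        have hv1 : ((2 * j.val + 1 : ℕ) : ZMod (2*k - 1 + 1)).val = 2 * j.val + 1 :=
          hvcast _ (by omega)
        rw [Prod.mk.injEq, Prod.mk.injEq, Prod.mk.injEq]
        refine ⟨⟨?_, ?_⟩, ?_, ?_⟩
        · rw [hv1, show (2 * j.val + 1) % 2 = 1 from by omega]; simp
        · rw [hv1, show (2 * j.val + 1) / 2 = j.val from by omega, key]
        · rw [hvadd, hv1]
          rcases Nat.lt_or_ge (j.val + 1) k with h | h
          · rw [Nat.mod_eq_of_lt (show 2 * j.val + 1 + 1 < 2*k from by omega),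
              show (2 * j.val + 1 + 1) % 2 = 0 from by omega]
            simp
          · rw [show 2 * j.val + 1 + 1 = 2*k from by omega, Nat.mod_self]
            simp
        · rw [hvadd, hv1]
          rcases Nat.lt_or_ge (j.val + 1) k with h | h
          · rw [Nat.mod_eq_of_lt (show 2 * j.val + 1 + 1 < 2*k from by omega),
              show (2 * j.val + 1 + 1) / 2 = j.val + 1 from by omega]
            push_cast
            rw [key]
          · have hjv : j.val = k - 1 := by omega
            rw [show 2 * j.val + 1 + 1 = 2*k from by omega, Nat.mod_self]
            have hj1 : j + 1 = 0 := by
              rw [← key j, hjv, ← Nat.cast_add_one,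
                show k - 1 + 1 = k from by omega, ZMod.natCast_self]
            rw [hj1]
            simp
    · rintro ⟨i, rfl⟩
      rw [mem_gBase_iff]
      have hi := hvlt i
      rcases Nat.even_or_odd i.val with he | ho
      · left
        refine ⟨((i.val / 2 : ℕ) : ZMod k), ?_⟩
        have hpar : i.val % 2 = 0 := Nat.even_iff.mp he
        have hlt : i.val + 1 < 2*k := by omega
        have hv2 : (i + 1).val = i.val + 1 := by
          rw [hvadd, Nat.mod_eq_of_lt hlt]
        rw [Prod.mk.injEq, Prod.mk.injEq, Prod.mk.injEq]
        refine ⟨⟨by rw [hpar]; simp, rfl⟩, ?_, ?_⟩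
        · rw [hv2, show (i.val + 1) % 2 = 1 from by omega]; simp
        · rw [hv2, show (i.val + 1) / 2 = i.val / 2 from by omega]
      · right
        refine ⟨((i.val / 2 : ℕ) : ZMod k), ?_⟩
        have hpar : i.val % 2 = 1 := Nat.odd_iff.mp ho
        rw [Prod.mk.injEq, Prod.mk.injEq, Prod.mk.injEq]
        refine ⟨⟨by rw [hpar]; simp, rfl⟩, ?_, ?_⟩
        · rw [hvadd]
          rcases Nat.lt_or_ge (i.val + 1) (2*k) with h | h
          · rw [Nat.mod_eq_of_lt h, show (i.val + 1) % 2 = 0 from by omega]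
            simp
          · rw [show i.val + 1 = 2*k from by omega, Nat.mod_self]
            simp
        · rw [hvadd]
          rcases Nat.lt_or_ge (i.val + 1) (2*k) with h | h
          · rw [Nat.mod_eq_of_lt h, show (i.val + 1) / 2 = i.val / 2 + 1 from by omega]
            push_cast; ring
          · have hiv : i.val = 2*k - 1 := by omega
            rw [show i.val + 1 = 2*k from by omega, Nat.mod_self, hiv,
              show (2*k - 1) / 2 = k - 1 from by omega,
              show (0:ℕ) / 2 = 0 from rfl]
            rw [← Nat.cast_add_one, show k - 1 + 1 = k from by omega, ZMod.natCast_self]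
            simp

lemma gBase_subset_gE : gBase k ⊆ gE k := by
  intro e he
  rw [mem_gBase_iff] at he
  rw [mem_gE_iff]
  tauto

end Aux

/-- in the graph `(gE k, gw k)`, the unique negative-weight simple
directed cycle is the base cycle, and its weight is `-2k`. -/
theorem stmt_19 (k : ℕ) (hk : 0 < k) [NeZero k] :
    (∀ C : Finset ((Fin 4 × ZMod k) × (Fin 4 × ZMod k)),
      (IsCycle C ∧ C ⊆ gE k ∧ (∑ e ∈ C, gw k e) < 0) ↔ C = gBase k) ∧
    (∑ e ∈ gBase k, gw k e) = -(2 * k) := by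
  have hsum_base : (∑ e ∈ gBase k, gw k e) = -(2 * (k:ℝ)) := by
    rw [Finset.sum_congr rfl (fun e he => gw_of_base he), Finset.sum_const, card_gBase]
    ring
  have hkR : (0:ℝ) < k := by exact_mod_cast hk
  refine ⟨fun C => ⟨?_, ?_⟩, by rw [hsum_base]⟩
  · rintro ⟨hC, hsub, hneg⟩
    -- Step 1: C ⊆ gBase k
    have hCB : C ⊆ gBase k := by
      by_contra hcon
      obtain ⟨e, heC, heB⟩ := Finset.not_subset.mp hcon
      obtain ⟨i, hbad⟩ : ∃ i : ZMod k, (((0:Fin 4), i), ((1:Fin 4), i)) ∉ C := by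
        have hgE := hsub heC
        rw [mem_gE_iff] at hgE
        rcases hgE with ⟨i, rfl⟩ | ⟨i, rfl⟩ | ⟨i, rfl⟩ | ⟨i, rfl⟩ | ⟨i, rfl⟩ | ⟨i, rfl⟩
        · exact absurd (mem_gBase_iff.2 (Or.inl ⟨i, rfl⟩)) heB
        · exact absurd (mem_gBase_iff.2 (Or.inr ⟨i, rfl⟩)) heB
        · exact ⟨i, fun hmem => by
            have := cyc_out hC hmem heC; simp [Prod.ext_iff] at this⟩
        · exact ⟨i, fun hmem => by
            have := cyc_in hC hmem heC; simp [Prod.ext_iff] at this⟩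
        · exact ⟨i, fun hmem => by
            have := cyc_out hC hmem heC; simp [Prod.ext_iff] at this⟩
        · exact ⟨i, fun hmem => by
            have := cyc_in hC hmem heC; simp [Prod.ext_iff] at this⟩
      set B := C.filter (fun e => e ∈ gBase k) with hBdef
      set D := C.filter (fun e => e ∉ gBase k) with hDdef
      have hsplit : (∑ e ∈ C, gw k e) = (∑ e ∈ B, gw k e) + (∑ e ∈ D, gw k e) :=
        (Finset.sum_filter_add_sum_filter_not C _ _).symm
      have hBsum : (∑ e ∈ B, gw k e) = -(B.card : ℝ) := by
        rw [Finset.sum_congr rfl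
          (fun e he => gw_of_base (Finset.mem_filter.mp he).2), Finset.sum_const]
        simp
        rfl
      have hBcard : B.card + 1 ≤ 2*k := by
        have hsubB : B ⊆ (gBase k).erase (((0:Fin 4), i), ((1:Fin 4), i)) := by
          intro x hx
          rw [Finset.mem_erase]
          exact ⟨fun hxx => hbad (hxx ▸ (Finset.mem_filter.mp hx).1),
            (Finset.mem_filter.mp hx).2⟩
        have h1 := Finset.card_le_card hsubB
        rw [Finset.card_erase_of_mem (mem_gBase_iff.2 (Or.inl ⟨i, rfl⟩)), card_gBase] at h1
        omega
      have hDw : ∀ e ∈ D, gw k e = 2*(k:ℝ) := by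
        intro e he
        obtain ⟨heC', heB'⟩ := Finset.mem_filter.mp he
        have hgE := hsub heC'
        rw [mem_gE_iff] at hgE
        rcases hgE with ⟨i', rfl⟩ | ⟨i', rfl⟩ | ⟨i', rfl⟩ | ⟨i', rfl⟩ | ⟨i', rfl⟩ | ⟨i', rfl⟩
        · exact absurd (mem_gBase_iff.2 (Or.inl ⟨i', rfl⟩)) heB'
        · exact absurd (mem_gBase_iff.2 (Or.inr ⟨i', rfl⟩)) heB'
        all_goals simp [gw]
      have hDsum : (∑ e ∈ D, gw k e) = (D.card : ℝ) * (2*(k:ℝ)) := by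
        rw [Finset.sum_congr rfl hDw, Finset.sum_const, nsmul_eq_mul]
      have hDpos : 1 ≤ D.card :=
        Finset.card_pos.mpr ⟨e, Finset.mem_filter.mpr ⟨heC, heB⟩⟩
      rw [hsplit, hBsum, hDsum] at hneg
      have hBle : (B.card : ℝ) + 1 ≤ 2*(k:ℝ) := by exact_mod_cast hBcard
      have hDge : (1:ℝ) ≤ (D.card : ℝ) := by exact_mod_cast hDpos
      nlinarith [hneg, hBle, hDge, hkR]
    -- Step 2: C = gBase k
    obtain ⟨n, f, hf, hCeq⟩ := hC
    have hmemC : ∀ i : ZMod (n+1), (f i, f (i+1)) ∈ C := fun i => by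
      rw [hCeq]; exact Finset.mem_image.2 ⟨i, Finset.mem_univ _, rfl⟩
    have hstep : ∀ i : ZMod (n+1), (f i).1 ≤ 1 ∧ f (i+1) = gsucc k (f i) := fun i =>
      mem_gBase_iff'.1 (hCB (hmemC i))
    have hiter : ∀ m : ℕ, f (m : ZMod (n+1)) = (gsucc k)^[m] (f 0) := by
      intro m
      induction m with
      | zero => simp
      | succ m ih =>
          have hc : ((m+1 : ℕ) : ZMod (n+1)) = (m : ZMod (n+1)) + 1 := by push_cast; ring
          rw [hc, (hstep _).2, ih, Function.iterate_succ_apply']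
    apply Finset.Subset.antisymm hCB
    intro e he
    obtain ⟨⟨t, j⟩, v2⟩ := e
    rw [mem_gBase_iff'] at he
    obtain ⟨he1, he2⟩ := he
    simp only at he1 he2
    subst he2
    obtain ⟨m, hm⟩ := gsucc_orbit (f 0) (t, j) (hstep 0).1 he1
    have hfm : f (m : ZMod (n+1)) = (t, j) := (hiter m).trans hm
    have hmem := hmemC (m : ZMod (n+1))
    rw [(hstep _).2, hfm] at hmem
    exact hmem
  · rintro rfl
    exact ⟨isCycle_gBase hk, gBase_subset_gE, by rw [hsum_base]; linarith⟩
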